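/- For every integer ℓ ≥ 0, the negative continued fraction [7, …, 7, 5]⁻ with ℓ entries equal to 7 followed by a final entry 5 equals F_{4ℓ+5}/F_{4ℓ+1}, where F_n is the n-th Fibonacci number. -/
import Mathlib


/-- Negative continued fraction: `ncf [a₁,…,a_k] = a₁ - 1/ncf [a₂,…,a_k]` and `ncf [a] = a`
(it is well-defined provided every proper suffix has nonzero value; otherwise the
junk value `1/0 = 0` of ℚ is used). -/
def ncf : List ℤ → ℚ
  | [] => 0
  | a :: l => (a : ℚ) - 1 / ncf l

lemma fib_key (n : ℕ) : Nat.fib (n + 8) + Nat.fib n = 7 * Nat.fib (n + 4) := by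
  have h8 : Nat.fib (n + 7 + 1) = Nat.fib n * Nat.fib 7 + Nat.fib (n + 1) * Nat.fib 8 :=
    Nat.fib_add n 7
  have h4 : Nat.fib (n + 3 + 1) = Nat.fib n * Nat.fib 3 + Nat.fib (n + 1) * Nat.fib 4 :=
    Nat.fib_add n 3
  rw [show Nat.fib 7 = 13 from rfl, show Nat.fib 8 = 21 from rfl] at h8
  rw [show Nat.fib 3 = 2 from rfl, show Nat.fib 4 = 3 from rfl] at h4
  rw [show n + 8 = n + 7 + 1 from rfl, show n + 4 = n + 3 + 1 from rfl, h8, h4]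
  ring

/-- [7,…,7,5]⁻ with ℓ entries equal to 7 equals F_{4ℓ+5}/F_{4ℓ+1}. -/
theorem stmt_11 (l : ℕ) :
    ncf (List.replicate l (7 : ℤ) ++ [5]) =
      (Nat.fib (4 * l + 5) : ℚ) / (Nat.fib (4 * l + 1) : ℚ) := by
  induction l with
  | zero => norm_num [ncf]
  | succ n ih =>
    rw [List.replicate_succ, List.cons_append]
    show (7 : ℚ) - 1 / ncf _ = _
    rw [ih]
    have h1 : (Nat.fib (4 * n + 1) : ℚ) ≠ 0 := by
      exact_mod_cast (Nat.fib_pos.mpr (by omega)).ne'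
    have h5 : (Nat.fib (4 * n + 5) : ℚ) ≠ 0 := by
      exact_mod_cast (Nat.fib_pos.mpr (by omega)).ne'
    have key : (Nat.fib (4 * n + 1 + 8) : ℚ) + Nat.fib (4 * n + 1) =
        7 * Nat.fib (4 * n + 1 + 4) := by exact_mod_cast fib_key (4 * n + 1)
    have e9 : 4 * (n + 1) + 5 = 4 * n + 1 + 8 := by ring
    have e5 : 4 * (n + 1) + 1 = 4 * n + 1 + 4 := by ring
    have e5' : 4 * n + 5 = 4 * n + 1 + 4 := by ring
    rw [e9, e5, e5'] at *
    field_simp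
    linarith [key]
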